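/- For all integers η ≥ 2, l ≥ 1 and every integer q ≥ 1, the generalized windmill graph of Type I with k = 1 satisfies Z_q(W'(η,1,l)) = l + η − 2. -/

import Mathlib

namespace ZqForcing

variable {V : Type*}

/-- `u` forces `v` within the allowed vertex set `A`, given the filled set `F`:
`u` is filled, `v` is its unique unfilled neighbor inside `A`. -/
def forceIn (G : SimpleGraph V) (A F : Set V) (u v : V) : Prop :=
  u ∈ A ∧ v ∈ A ∧ u ∈ F ∧ v ∉ F ∧ G.Adj u v ∧
    ∀ w ∈ A, G.Adj u w → w ∉ F → w = v

/-- One step of the standard zero forcing color change rule. -/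
def zfStep (G : SimpleGraph V) (F F' : Set V) : Prop :=
  ∃ u v, forceIn G Set.univ F u v ∧ F' = insert v F

/-- `S` is a zero forcing set: repeated color changes fill all of `V`. -/
def IsZeroForcingSet (G : SimpleGraph V) (S : Set V) : Prop :=
  Relation.ReflTransGen (zfStep G) S Set.univ

/-- The zero forcing number `Z(G)`. -/
noncomputable def zeroForcingNumber (G : SimpleGraph V) : ℕ :=
  sInf {n | ∃ S : Set V, S.ncard = n ∧ IsZeroForcingSet G S}

/-- Reachability in `G - F`, i.e. through vertices avoiding `F`. -/
def reachAvoid (G : SimpleGraph V) (F : Set V) : V → V → Prop :=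
  Relation.ReflTransGen (fun a b => G.Adj a b ∧ a ∉ F ∧ b ∉ F)

/-- The positive semidefinite color change rule: filled `u` forces unfilled `v` when `v`
is the unique neighbor of `u` in the connected component of `G - F` containing `v`. -/
def psdForce (G : SimpleGraph V) (F : Set V) (u v : V) : Prop :=
  u ∈ F ∧ v ∉ F ∧ G.Adj u v ∧
    ∀ w, G.Adj u w → w ∉ F → reachAvoid G F v w → w = v

/-- One step of the positive semidefinite color change rule. -/
def psdStep (G : SimpleGraph V) (F F' : Set V) : Prop :=
  ∃ u v, psdForce G F u v ∧ F' = insert v F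

/-- `S` is a positive semidefinite zero forcing set. -/
def IsPSDForcingSet (G : SimpleGraph V) (S : Set V) : Prop :=
  Relation.ReflTransGen (psdStep G) S Set.univ

/-- The positive semidefinite zero forcing number `Z₊(G)`. -/
noncomputable def psdZeroForcingNumber (G : SimpleGraph V) : ℕ :=
  sInf {n | ∃ S : Set V, S.ncard = n ∧ IsPSDForcingSet G S}

/-- The vertex sets of the connected components of the subgraph induced on
the unfilled vertices. -/
def unfilledComponents (G : SimpleGraph V) (F : Set V) : Set (Set V) :=
  {C | ∃ v, v ∉ F ∧ C = {w | reachAvoid G F v w}}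

/-- A forcing step performed inside the induced subgraph on the vertex set `A`. -/
def rule3Step (G : SimpleGraph V) (A F F' : Set V) : Prop :=
  ∃ u v, forceIn G A F u v ∧ F' = insert v F

/-- `ZqWinFrom G q F t`: starting from the filled set `F`, the player can guarantee to
fill all vertices using at most `t` further tokens against every oracle strategy, in the
`q`-analogue zero forcing game. -/
inductive ZqWinFrom (G : SimpleGraph V) (q : ℕ) : Set V → ℕ → Prop
  | done (t : ℕ) : ZqWinFrom G q Set.univ t
  | rule1 {F : Set V} {t : ℕ} (v : V) (hv : v ∉ F)
      (h : ZqWinFrom G q (insert v F) t) : ZqWinFrom G q F (t + 1)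
  | rule2 {F : Set V} {t : ℕ} (u v : V) (huv : forceIn G Set.univ F u v)
      (h : ZqWinFrom G q (insert v F) t) : ZqWinFrom G q F t
  | rule3 {F : Set V} {t : ℕ} (𝒞 : Set (Set V))
      (h𝒞 : 𝒞 ⊆ unfilledComponents G F) (hcard : q + 1 ≤ 𝒞.ncard)
      (next : ∀ 𝒮 : Set (Set V), 𝒮 ⊆ 𝒞 → 𝒮.Nonempty → Set V)
      (hnext : ∀ (𝒮 : Set (Set V)) (h1 : 𝒮 ⊆ 𝒞) (h2 : 𝒮.Nonempty),
        Relation.ReflTransGen (rule3Step G (F ∪ ⋃₀ 𝒮)) F (next 𝒮 h1 h2))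
      (h : ∀ (𝒮 : Set (Set V)) (h1 : 𝒮 ⊆ 𝒞) (h2 : 𝒮.Nonempty),
        ZqWinFrom G q (next 𝒮 h1 h2) t) :
      ZqWinFrom G q F t

/-- The `q`-analogue zero forcing number `Z_q(G)`. -/
noncomputable def qZeroForcingNumber (G : SimpleGraph V) (q : ℕ) : ℕ :=
  sInf {t | ZqWinFrom G q ∅ t}

/-- The induced subgraph on `B` is connected and has no cut vertex. -/
def NoCutVertex (G : SimpleGraph V) (B : Set V) : Prop :=
  (G.induce B).Connected ∧
    ∀ v ∈ B, (B \ {v}).Nonempty → (G.induce (B \ {v})).Connected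

/-- `B` is a block of `G`: a maximal (vertex set of a) connected subgraph without
a cut vertex. -/
def IsBlock (G : SimpleGraph V) (B : Set V) : Prop :=
  NoCutVertex G B ∧ ∀ B' : Set V, B ⊆ B' → NoCutVertex G B' → B' = B

/-- A block graph: a connected graph each of whose blocks is a clique. -/
def IsBlockGraph (G : SimpleGraph V) : Prop :=
  G.Connected ∧ ∀ B : Set V, IsBlock G B → G.IsClique B

/-- A cactus graph: connected, and every edge lies on at most one cycle
(cycles being identified when they have the same edge set). -/
def IsCactus (G : SimpleGraph V) : Prop :=
  G.Connected ∧ ∀ (a b : V) (c : G.Walk a a) (d : G.Walk b b),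
    c.IsCycle → d.IsCycle → ∀ e ∈ c.edges, e ∈ d.edges →
      ∀ e', e' ∈ c.edges ↔ e' ∈ d.edges

/-- `c` is an induced (chordless) cycle of `G`. -/
def IsInducedCycle (G : SimpleGraph V) {v : V} (c : G.Walk v v) : Prop :=
  c.IsCycle ∧ ∀ x ∈ c.support, ∀ y ∈ c.support, G.Adj x y → s(x, y) ∈ c.edges

/-- Generalized windmill graph of Type I: η disjoint copies of `K_k` together with
`l` central vertices forming a clique, each central vertex adjacent to everything. -/
def windmillI (η k l : ℕ) : SimpleGraph ((Fin η × Fin k) ⊕ Fin l) :=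
  SimpleGraph.fromRel (fun a b =>
    match a, b with
    | Sum.inl (i, _), Sum.inl (i', _) => i = i'
    | Sum.inr _, Sum.inr _ => True
    | _, _ => True)

/-- Generalized windmill graph of Type II: η disjoint copies of `K_k` together with
`l` pairwise nonadjacent central vertices, each adjacent to every clique vertex. -/
def windmillII (η k l : ℕ) : SimpleGraph ((Fin η × Fin k) ⊕ Fin l) :=
  SimpleGraph.fromRel (fun a b =>
    match a, b with
    | Sum.inl (i, _), Sum.inl (i', _) => i = i'
    | Sum.inr _, Sum.inr _ => False
    | _, _ => True)

/-- Generalized star (spider) graph: a center `none` together with `k` disjoint paths,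
the `i`-th of length `m i`, attached to the center at one endpoint. -/
def spider {k : ℕ} (m : Fin k → ℕ) : SimpleGraph (Option (Σ i : Fin k, Fin (m i))) :=
  SimpleGraph.fromRel (fun a b =>
    match a, b with
    | none, some ⟨_, j⟩ => j.val = 0
    | some ⟨i, j⟩, some ⟨i', j'⟩ => i = i' ∧ j.val + 1 = j'.val
    | _, _ => False)


/-! ### Auxiliary lemmas for stmt11 -/

section Aux

lemma win_mono {G : SimpleGraph V} {q : ℕ} {F : Set V} {t : ℕ}
    (h : ZqWinFrom G q F t) (s : ℕ) : ZqWinFrom G q F (t + s) := by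
  induction h with
  | done t => exact .done _
  | rule1 v hv h ih =>
      rw [Nat.add_right_comm]
      exact .rule1 v hv ih
  | rule2 u v huv h ih => exact .rule2 u v huv ih
  | rule3 𝒞 h𝒞 hcard next hnext h ih =>
      exact .rule3 𝒞 h𝒞 hcard next hnext ih

lemma win_insert {G : SimpleGraph V} {q : ℕ} {F : Set V} {t : ℕ} (v : V)
    (h : ZqWinFrom G q (insert v F) t) : ZqWinFrom G q F (t + 1) := by
  by_cases hv : v ∈ F
  · rw [Set.insert_eq_self.mpr hv] at h
    exact win_mono h 1
  · exact .rule1 v hv h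

lemma win_union {G : SimpleGraph V} {q : ℕ} [DecidableEq V] (S : Finset V) :
    ∀ (F : Set V) (t : ℕ), ZqWinFrom G q (F ∪ ↑S) t → ZqWinFrom G q F (t + S.card) := by
  induction S using Finset.induction with
  | empty => intro F t h; simpa using h
  | @insert a S ha ih =>
      intro F t h
      have h1 : (F ∪ (↑(insert a S) : Set V)) = insert a (F ∪ ↑S) := by
        simp [Finset.coe_insert, Set.union_insert]
      rw [h1] at h
      have h3 := ih F (t + 1) (win_insert a h)
      have h4 : t + (insert a S).card = t + 1 + S.card := by
        rw [Finset.card_insert_of_notMem ha]; omega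
      rw [h4]; exact h3

section Windmill

variable {η l : ℕ}

private lemma wm_not_adj_ll (p q : Fin η × Fin 1) :
    ¬ (windmillI η 1 l).Adj (Sum.inl p) (Sum.inl q) := by
  obtain ⟨i, x⟩ := p
  obtain ⟨j, y⟩ := q
  simp only [windmillI, SimpleGraph.fromRel_adj]
  rintro ⟨hne, h | h⟩
  · exact hne (by rw [h, Subsingleton.elim x y])
  · exact hne (by rw [h, Subsingleton.elim x y])

private lemma wm_adj_lr (p : Fin η × Fin 1) (j : Fin l) :
    (windmillI η 1 l).Adj (Sum.inl p) (Sum.inr j) := by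
  obtain ⟨i, x⟩ := p
  simp [windmillI, SimpleGraph.fromRel_adj]

private lemma wm_adj_rr {i j : Fin l} (h : i ≠ j) :
    (windmillI η 1 l).Adj (Sum.inr i : (Fin η × Fin 1) ⊕ Fin l) (Sum.inr j) := by
  simp [windmillI, SimpleGraph.fromRel_adj, h]

private lemma wm_adj_r (i : Fin l) (w : (Fin η × Fin 1) ⊕ Fin l) (hw : w ≠ Sum.inr i) :
    (windmillI η 1 l).Adj (Sum.inr i) w := by
  rcases w with p | j
  · exact (wm_adj_lr p i).symm
  · exact wm_adj_rr (fun h => hw (by rw [h]))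

open Classical in
/-- Potential bonus: 1 if some central vertex is unfilled, plus 1 if some vertex
is unfilled. -/
noncomputable def bonus (l : ℕ) {α : Type*} (F : Set (α ⊕ Fin l)) : ℕ :=
  (if ∃ j : Fin l, Sum.inr j ∉ F then 1 else 0) + (if ∃ v, v ∉ F then 1 else 0)

lemma bonus_insert_le {α : Type*} (F : Set (α ⊕ Fin l)) (v : α ⊕ Fin l) :
    bonus l (insert v F) ≤ bonus l F := by
  unfold bonus
  apply Nat.add_le_add
  · split_ifs with h1 h2
    · omega
    · obtain ⟨j, hj⟩ := h1
      exact absurd ⟨j, fun hf => hj (Set.mem_insert_of_mem _ hf)⟩ h2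
    · omega
    · omega
  · split_ifs with h1 h2
    · omega
    · obtain ⟨w, hw⟩ := h1
      exact absurd ⟨w, fun hf => hw (Set.mem_insert_of_mem _ hf)⟩ h2
    · omega
    · omega

lemma force_bonus {F : Set ((Fin η × Fin 1) ⊕ Fin l)} {u v : (Fin η × Fin 1) ⊕ Fin l}
    (h : forceIn (windmillI η 1 l) Set.univ F u v) :
    bonus l (insert v F) + 1 ≤ bonus l F := by
  classical
  obtain ⟨-, -, huF, hvF, hadj, huniq⟩ := h
  rcases u with p | i
  · -- filled leaf forces; target must be a central, and it's the unique unfilled central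
    rcases v with pv | jv
    · exact absurd hadj (wm_not_adj_ll _ _)
    · have hcent : ¬ ∃ j : Fin l, Sum.inr j ∉ insert (Sum.inr jv : (Fin η × Fin 1) ⊕ Fin l) F := by
        rintro ⟨j, hj⟩
        have hjF : Sum.inr j ∉ F := fun hf => hj (Set.mem_insert_of_mem _ hf)
        have := huniq (Sum.inr j) trivial (wm_adj_lr p j) hjF
        exact hj (this ▸ Set.mem_insert _ _)
      unfold bonus
      rw [if_neg hcent, if_pos (show ∃ j : Fin l, Sum.inr j ∉ F from ⟨jv, hvF⟩),
        if_pos (show ∃ w : (Fin η × Fin 1) ⊕ Fin l, w ∉ F from ⟨Sum.inr jv, hvF⟩)]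
      split_ifs <;> omega
  · -- filled central forces; all vertices become filled
    have hall : ¬ ∃ w, w ∉ insert v F := by
      rintro ⟨w, hw⟩
      have hwF : w ∉ F := fun hf => hw (Set.mem_insert_of_mem _ hf)
      have hwu : w ≠ Sum.inr i := fun h => hwF (h ▸ huF)
      have := huniq w trivial (wm_adj_r i w hwu) hwF
      exact hw (this ▸ Set.mem_insert _ _)
    have hcent : ¬ ∃ j : Fin l, Sum.inr j ∉ insert v F := by
      rintro ⟨j, hj⟩; exact hall ⟨Sum.inr j, hj⟩
    unfold bonus
    rw [if_neg hcent, if_neg hall, if_pos (show ∃ w : (Fin η × Fin 1) ⊕ Fin l, w ∉ F from ⟨v, hvF⟩)]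
    split_ifs <;> omega

lemma reach_symm {G : SimpleGraph V} {F : Set V} {v w : V}
    (h : reachAvoid G F v w) : reachAvoid G F w v :=
  (@Relation.ReflTransGen.stdSymm _ _ ⟨fun _ _ hab => ⟨hab.1.symm, hab.2.2, hab.2.1⟩⟩).symm _ _ h

lemma wm_centrals_filled {F : Set ((Fin η × Fin 1) ⊕ Fin l)}
    {𝒞 : Set (Set ((Fin η × Fin 1) ⊕ Fin l))}
    (h𝒞 : 𝒞 ⊆ unfilledComponents (windmillI η 1 l) F) (hcard : 2 ≤ 𝒞.ncard)
    (j : Fin l) : Sum.inr j ∈ F := by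
  by_contra hj
  obtain ⟨C1, C2, hC1, hC2, hne⟩ := (Set.one_lt_ncard_iff (Set.toFinite 𝒞)).mp (by omega)
  obtain ⟨v1, hv1, rfl⟩ := h𝒞 hC1
  obtain ⟨v2, hv2, rfl⟩ := h𝒞 hC2
  have hr : ∀ v : (Fin η × Fin 1) ⊕ Fin l, v ∉ F →
      reachAvoid (windmillI η 1 l) F v (Sum.inr j) := by
    intro v hv
    by_cases hvj : v = Sum.inr j
    · rw [hvj]; exact Relation.ReflTransGen.refl
    · exact Relation.ReflTransGen.single ⟨(wm_adj_r j v hvj).symm, hv, hj⟩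
  apply hne
  ext w
  simp only [Set.mem_setOf_eq]
  constructor
  · intro h
    exact ((hr v2 hv2).trans (reach_symm (hr v1 hv1))).trans h
  · intro h
    exact ((hr v1 hv1).trans (reach_symm (hr v2 hv2))).trans h

lemma wm_component_singleton {F : Set ((Fin η × Fin 1) ⊕ Fin l)}
    (hcent : ∀ j : Fin l, Sum.inr j ∈ F) {C : Set ((Fin η × Fin 1) ⊕ Fin l)}
    (hC : C ∈ unfilledComponents (windmillI η 1 l) F) :
    ∃ p : Fin η × Fin 1, C = {Sum.inl p} ∧ Sum.inl p ∉ F := by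
  obtain ⟨v, hv, rfl⟩ := hC
  rcases v with p | j
  · refine ⟨p, ?_, hv⟩
    ext w
    simp only [Set.mem_setOf_eq, Set.mem_singleton_iff]
    constructor
    · intro h
      rcases Relation.ReflTransGen.cases_head h with h' | ⟨b, ⟨hadj, -, hnb⟩, -⟩
      · exact h'.symm
      · exfalso
        rcases b with pb | jb
        · exact wm_not_adj_ll _ _ hadj
        · exact hnb (hcent jb)
    · rintro rfl
      exact Relation.ReflTransGen.refl
  · exact absurd (hcent j) hv

lemma wm_no_rule3_step {F : Set ((Fin η × Fin 1) ⊕ Fin l)}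
    {𝒞 : Set (Set ((Fin η × Fin 1) ⊕ Fin l))}
    (h𝒞 : 𝒞 ⊆ unfilledComponents (windmillI η 1 l) F) (hcard : 2 ≤ 𝒞.ncard) :
    ∀ F', ¬ rule3Step (windmillI η 1 l) (F ∪ ⋃₀ 𝒞) F F' := by
  intro F' hstep
  obtain ⟨u, v, ⟨huA, hvA, huF, hvF, hadj, huniq⟩, -⟩ := hstep
  have hcent := wm_centrals_filled h𝒞 hcard
  obtain ⟨C1, C2, hC1, hC2, hne⟩ := (Set.one_lt_ncard_iff (Set.toFinite 𝒞)).mp (by omega)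
  obtain ⟨p1, hC1eq, hp1⟩ := wm_component_singleton hcent (h𝒞 hC1)
  obtain ⟨p2, hC2eq, hp2⟩ := wm_component_singleton hcent (h𝒞 hC2)
  have hp12 : (Sum.inl p1 : (Fin η × Fin 1) ⊕ Fin l) ≠ Sum.inl p2 := by
    intro h
    exact hne (by rw [hC1eq, hC2eq, h])
  obtain ⟨i, rfl⟩ : ∃ i : Fin l, u = Sum.inr i := by
    rcases u with pu | i
    · exfalso
      rcases v with pv | jv
      · exact wm_not_adj_ll _ _ hadj
      · exact hvF (hcent jv)
    · exact ⟨i, rfl⟩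
  have h1A : (Sum.inl p1 : (Fin η × Fin 1) ⊕ Fin l) ∈ F ∪ ⋃₀ 𝒞 :=
    Or.inr ⟨C1, hC1, by rw [hC1eq]; exact rfl⟩
  have h2A : (Sum.inl p2 : (Fin η × Fin 1) ⊕ Fin l) ∈ F ∪ ⋃₀ 𝒞 :=
    Or.inr ⟨C2, hC2, by rw [hC2eq]; exact rfl⟩
  have e1 := huniq (Sum.inl p1) h1A (wm_adj_r i _ (by simp)) hp1
  have e2 := huniq (Sum.inl p2) h2A (wm_adj_r i _ (by simp)) hp2
  exact hp12 (e1.trans e2.symm)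

lemma chain_eq_self {G : SimpleGraph V} {A F X : Set V}
    (hno : ∀ F', ¬ rule3Step G A F F')
    (h : Relation.ReflTransGen (rule3Step G A) F X) : X = F := by
  rcases Relation.ReflTransGen.cases_head h with h' | ⟨F', hF', -⟩
  · exact h'.symm
  · exact absurd hF' (hno F')

lemma wm_invariant {q : ℕ} (hq : 1 ≤ q) {F0 : Set ((Fin η × Fin 1) ⊕ Fin l)} {t0 : ℕ}
    (h : ZqWinFrom (windmillI η 1 l) q F0 t0) :
    (F0ᶜ).ncard ≤ t0 + bonus l F0 := by
  induction h with
  | done t => simp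
  | @rule1 F t v hv h ih =>
      have h1 : (insert v F)ᶜ = Fᶜ \ {v} := by
        ext w; simp [Set.mem_insert_iff, not_or, and_comm]
      have h2 : (Fᶜ \ {v}).ncard + 1 = Fᶜ.ncard :=
        Set.ncard_diff_singleton_add_one (show v ∈ Fᶜ from hv) (Set.toFinite _)
      have hb := bonus_insert_le F v
      rw [h1] at ih
      omega
  | @rule2 F t u v huv h ih =>
      have hvF : v ∉ F := huv.2.2.2.1
      have h1 : (insert v F)ᶜ = Fᶜ \ {v} := by
        ext w; simp [Set.mem_insert_iff, not_or, and_comm]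
      have h2 : (Fᶜ \ {v}).ncard + 1 = Fᶜ.ncard :=
        Set.ncard_diff_singleton_add_one (show v ∈ Fᶜ from hvF) (Set.toFinite _)
      have hb := force_bonus huv
      rw [h1] at ih
      omega
  | @rule3 F t 𝒞 h𝒞 hcard next hnext h ih =>
      have h2 : 2 ≤ 𝒞.ncard := by omega
      have hne : 𝒞.Nonempty := Set.nonempty_of_ncard_ne_zero (by omega)
      have heq : next 𝒞 (subset_refl _) hne = F :=
        chain_eq_self (wm_no_rule3_step h𝒞 h2) (hnext 𝒞 (subset_refl _) hne)
      have := ih 𝒞 (subset_refl _) hne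
      rwa [heq] at this

end Windmill

end Aux

/-- for `η ≥ 2`, `l ≥ 1` and `q ≥ 1`, `Z_q(W'(η,1,l)) = l + η - 2`. -/
theorem stmt11 (η l : ℕ) (hη : 2 ≤ η) (hl : 1 ≤ l) (q : ℕ) (hq : 1 ≤ q) :
    qZeroForcingNumber (windmillI η 1 l) q = l + η - 2 := by
  classical
  set x0 : (Fin η × Fin 1) ⊕ Fin l := Sum.inl (⟨0, by omega⟩, 0) with hx0
  set c0 : (Fin η × Fin 1) ⊕ Fin l := Sum.inr ⟨0, by omega⟩ with hc0
  set x1 : (Fin η × Fin 1) ⊕ Fin l := Sum.inl (⟨1, by omega⟩, 0) with hx1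
  set F₀ : Set ((Fin η × Fin 1) ⊕ Fin l) := ({x0, c0} : Set _)ᶜ with hF₀
  -- upper bound: a winning strategy
  have hx0c0' : x0 ≠ c0 := by simp [hx0, hc0]
  have hx1x0 : x1 ≠ x0 := by
    rw [hx1, hx0]
    intro h
    have h1 := (Prod.mk.injEq _ _ _ _ ▸ Sum.inl.injEq _ _ ▸ h).1
    have h2 : (1 : ℕ) = 0 := congrArg Fin.val h1
    omega
  have hx1c0 : x1 ≠ c0 := by simp [hx1, hc0]
  have hwin : ZqWinFrom (windmillI η 1 l) q F₀ 0 := by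
    have hx1F : x1 ∈ F₀ := by
      rw [hF₀]
      intro h
      rw [Set.mem_insert_iff, Set.mem_singleton_iff] at h
      rcases h with h | h
      · exact hx1x0 h
      · exact hx1c0 h
    have hx0F : x0 ∉ F₀ := fun h => h (Set.mem_insert _ _)
    have hc0F : c0 ∉ F₀ := fun h => h (Set.mem_insert_of_mem _ rfl)
    have hstep2 : ZqWinFrom (windmillI η 1 l) q (insert c0 F₀) 0 := by
      apply ZqWinFrom.rule2 c0 x0
      · refine ⟨trivial, trivial, Set.mem_insert _ _, ?_, ?_, ?_⟩
        · intro hmem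
          rcases Set.mem_insert_iff.mp hmem with h | h
          · exact hx0c0' h
          · exact hx0F h
        · rw [hx0, hc0]; exact (wm_adj_lr _ _).symm
        · intro w _ hadj hw
          have h1 : w ≠ c0 := fun h => hw (h ▸ Set.mem_insert _ _)
          have h2 : w ∉ F₀ := fun h => hw (Set.mem_insert_of_mem _ h)
          have h3 : w ∈ ({x0, c0} : Set ((Fin η × Fin 1) ⊕ Fin l)) := not_not.mp h2
          rw [Set.mem_insert_iff, Set.mem_singleton_iff] at h3
          rcases h3 with h | h
          · exact h
          · exact absurd h h1
      · have huniv : insert x0 (insert c0 F₀) = Set.univ := by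
          ext w
          simp only [Set.mem_univ, iff_true, Set.mem_insert_iff]
          by_cases h1 : w = x0
          · exact Or.inl h1
          · by_cases h2 : w = c0
            · exact Or.inr (Or.inl h2)
            · refine Or.inr (Or.inr ?_)
              rw [hF₀]
              intro h
              rcases Set.mem_insert_iff.mp h with h | h
              · exact h1 h
              · exact h2 h
        rw [huniv]
        exact .done 0
    apply ZqWinFrom.rule2 x1 c0 _ hstep2
    refine ⟨trivial, trivial, hx1F, hc0F, ?_, ?_⟩
    · rw [hx1, hc0]; exact wm_adj_lr _ _
    · intro w _ hadj hw
      have h3 : w ∈ ({x0, c0} : Set ((Fin η × Fin 1) ⊕ Fin l)) := not_not.mp hw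
      rw [Set.mem_insert_iff, Set.mem_singleton_iff] at h3
      rcases h3 with h | h
      · exfalso
        rw [h, hx0, hx1] at hadj
        exact wm_not_adj_ll _ _ hadj
      · exact h
  -- the starting token count
  have hx0c0 : x0 ≠ c0 := by simp [hx0, hc0]
  have hcardV : Fintype.card ((Fin η × Fin 1) ⊕ Fin l) = η + l := by simp
  have hmem : l + η - 2 ∈ {t | ZqWinFrom (windmillI η 1 l) q ∅ t} := by
    have hS : ((∅ : Set ((Fin η × Fin 1) ⊕ Fin l)) ∪ ↑(({x0, c0} : Finset _)ᶜ)) = F₀ := by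
      rw [Set.empty_union, hF₀, Finset.coe_compl]
      congr 1
      simp
    have hw0 := win_union (({x0, c0} : Finset ((Fin η × Fin 1) ⊕ Fin l))ᶜ) ∅ 0
      (by rw [hS]; exact hwin)
    have hcardS : (({x0, c0} : Finset ((Fin η × Fin 1) ⊕ Fin l))ᶜ).card = l + η - 2 := by
      rw [Finset.card_compl, hcardV]
      have : ({x0, c0} : Finset ((Fin η × Fin 1) ⊕ Fin l)).card = 2 := by
        rw [Finset.card_insert_of_notMem (by simp [hx0c0]), Finset.card_singleton]
      rw [this]
      omega
    rw [hcardS] at hw0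
    simpa using hw0
  have hlow : ∀ t ∈ {t | ZqWinFrom (windmillI η 1 l) q ∅ t}, l + η - 2 ≤ t := by
    intro t ht
    have hinv := wm_invariant hq ht
    have h1 : ((∅ : Set ((Fin η × Fin 1) ⊕ Fin l))ᶜ).ncard = η + l := by
      rw [Set.compl_empty, Set.ncard_univ, Nat.card_eq_fintype_card, hcardV]
    have h2 : bonus l (∅ : Set ((Fin η × Fin 1) ⊕ Fin l)) ≤ 2 := by
      unfold bonus
      split_ifs <;> omega
    omega
  exact le_antisymm (Nat.sInf_le hmem) (le_csInf ⟨_, hmem⟩ hlow)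

end ZqForcing
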